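/- The integer symmetric quadratic form on ℤ⁶ given by the matrix K = [[0,0,0,2,1,0],[0,1,-1,-1,1,0],[0,-1,2,1,1,2],[2,-1,1,1,2,1],[1,1,1,2,4,2],[0,0,2,1,2,2]] is ℤ-equivalent to the diagonal form diag(1,1,1,-1,-1,-7); that is, there exists U ∈ GL₆(ℤ) with Uᵀ K U = diag(1,1,1,-1,-1,-7). -/

import Mathlib

open Matrix

def Kmat : Matrix (Fin 6) (Fin 6) ℤ :=
  !![0,0,0,2,1,0;
     0,1,-1,-1,1,0;
     0,-1,2,1,1,2;
     2,-1,1,1,2,1;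
     1,1,1,2,4,2;
     0,0,2,1,2,2]

def Umat : Matrix (Fin 6) (Fin 6) ℤ :=
  !![0,-2,0,2,-1,0;
     2,0,1,0,-1,-6;
     0,-2,-1,1,-2,3;
     1,1,0,-1,0,-3;
     -1,-2,-1,1,-1,6;
     -1,2,2,0,3,-4]

def Vmat : Matrix (Fin 6) (Fin 6) ℤ :=
  !![1,0,-4,-4,-2,-3;
     0,-1,-1,-7,-6,-3;
     -1,1,0,-2,0,0;
     1,-1,-2,-6,-5,-3;
     1,0,-2,2,2,0;
     0,0,-1,-2,-1,-1]

set_option maxHeartbeats 4000000 in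
lemma UV : Umat * Vmat = 1 := by
  ext i j
  fin_cases i <;> fin_cases j <;>
    simp [Umat, Vmat, Matrix.mul_apply, Fin.sum_univ_six, Matrix.one_apply] <;> decide

set_option maxHeartbeats 4000000 in
/-- The integral quadratic form `K` is `ℤ`-equivalent to `diag(1,1,1,-1,-1,-7)`. -/
theorem stmt_11 :
    ∃ U : Matrix (Fin 6) (Fin 6) ℤ, IsUnit U.det ∧
      Uᵀ * Kmat * U = Matrix.diagonal ![1,1,1,-1,-1,-7] := by
  refine ⟨Umat, ?_, ?_⟩
  · exact IsUnit.of_mul_eq_one Vmat.det (by rw [← Matrix.det_mul, UV, Matrix.det_one])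
  · ext i j
    fin_cases i <;> fin_cases j <;>
      simp [Kmat, Umat, Matrix.mul_apply, Matrix.transpose_apply, Fin.sum_univ_six,
        Matrix.diagonal] <;> decide
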